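/- Let T be a finite tree (a finite connected acyclic simple graph) in which every vertex has degree 1 or degree 3, equipped with an orientation of its edges (for each pair of adjacent vertices u, v, exactly one of the directed edges u→v or v→u is chosen). Assume that every degree-3 vertex has at least one incoming and at least one outgoing edge (so its in-degree is 1 or 2). If T has at least one vertex of degree 3, then there exists a degree-3 vertex v such that either v has out-degree 2 and at least one out-neighbor of v is a leaf, or v has in-degree 2 and at least one in-neighbor of v is a leaf. (This is the combinatorial content of the paper's Lemma that, whenever there are tiles of type T₃, there is a down saddle connected below to a min tile or an up saddle connected above to a max tile.) -/

import Mathlib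

open SimpleGraph Finset

/-- **Existence of a removable saddle (Lemma 6 of the paper).**
Let `T` be a finite tree in which every vertex has degree `1` or degree `3`,
equipped with an orientation `r` of its edges: for each pair of adjacent
vertices exactly one of the two directions is chosen.  Write
`inDeg v = #{u | r u v}` and `outDeg v = #{u | r v u}`.  Assume every
degree-`3` vertex has at least one incoming and at least one outgoing edge.
If `T` has a vertex of degree `3`, then there is a degree-`3` vertex `v`
such that either `v` has out-degree `2` and some out-neighbour of `v` is a
leaf, or `v` has in-degree `2` and some in-neighbour of `v` is a leaf. -/
theorem oriented_tree_exists_removable_trivalent_vertex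
    {V : Type*} [Fintype V] [DecidableEq V]
    (G : SimpleGraph V) [DecidableRel G.Adj]
    (hT : G.IsTree)
    (hdeg : ∀ v : V, G.degree v = 1 ∨ G.degree v = 3)
    (r : V → V → Prop) [DecidableRel r]
    (hr_adj : ∀ u v : V, r u v → G.Adj u v)
    (hr_orient : ∀ u v : V, G.Adj u v → (r u v ↔ ¬ r v u))
    (hflow : ∀ v : V, G.degree v = 3 →
      1 ≤ (univ.filter fun u : V => r u v).card ∧
      1 ≤ (univ.filter fun u : V => r v u).card)
    (hex : ∃ v : V, G.degree v = 3) :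
    ∃ v : V, G.degree v = 3 ∧
      (((univ.filter fun u : V => r v u).card = 2 ∧
          ∃ u : V, r v u ∧ G.degree u = 1) ∨
        ((univ.filter fun u : V => r u v).card = 2 ∧
          ∃ u : V, r u v ∧ G.degree u = 1)) := by
  classical
  obtain ⟨w₀, hw₀⟩ := hex
  -- a set closed under adjacency contains all walk endpoints
  have closed : ∀ (S : Set V), (∀ x ∈ S, ∀ y, G.Adj x y → y ∈ S) →
      ∀ {a b : V} (_ : G.Walk a b), a ∈ S → b ∈ S := by
    intro S hS a b p
    induction p with
    | nil => exact id
    | cons h _ ih => intro ha; exact ih (hS _ ha _ h)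
  -- the neighbour of every leaf has degree 3
  have leaf_nbr : ∀ l u : V, G.degree l = 1 → G.Adj l u → G.degree u = 3 := by
    intro l u hl hlu
    rcases hdeg u with hu | hu
    · exfalso
      have hNl : G.neighborFinset l = {u} := by
        obtain ⟨a, ha⟩ := Finset.card_eq_one.mp hl
        have : u ∈ G.neighborFinset l := by simpa using hlu
        rw [ha] at this
        rw [ha, Finset.mem_singleton.mp this]
      have hNu : G.neighborFinset u = {l} := by
        obtain ⟨a, ha⟩ := Finset.card_eq_one.mp hu
        have : l ∈ G.neighborFinset u := by simpa using hlu.symm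
        rw [ha] at this
        rw [ha, Finset.mem_singleton.mp this]
      have hclosed : ∀ x ∈ ({l, u} : Set V), ∀ y, G.Adj x y → y ∈ ({l, u} : Set V) := by
        intro x hx y hxy
        have hx' : x = l ∨ x = u := by simpa using hx
        rcases hx' with h | h
        · have hmem : y ∈ G.neighborFinset l := by
            rw [← h]; simpa using hxy
          rw [hNl] at hmem
          have : y = u := Finset.mem_singleton.mp hmem
          simp [this]
        · have hmem : y ∈ G.neighborFinset u := by
            rw [← h]; simpa using hxy
          rw [hNu] at hmem
          have : y = l := Finset.mem_singleton.mp hmem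
          simp [this]
      obtain ⟨p⟩ := hT.isConnected.preconnected l w₀
      have hw : w₀ ∈ ({l, u} : Set V) := closed _ hclosed p (Or.inl rfl)
      have hw' : w₀ = l ∨ w₀ = u := by simpa using hw
      rcases hw' with h | h
      · rw [h] at hw₀; omega
      · rw [h] at hw₀; omega
    · exact hu
  -- counting: #leaves = #trivalent + 2
  set L : Finset V := univ.filter fun v => G.degree v = 1 with hL
  set T3 : Finset V := univ.filter fun v => G.degree v = 3 with hT3
  have hdisj : Disjoint L T3 := by
    rw [Finset.disjoint_filter]
    intro x _ h1 h3
    omega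
  have hunion : L ∪ T3 = univ := by
    ext x
    simp only [Finset.mem_union, hL, hT3, Finset.mem_filter, Finset.mem_univ, true_and,
      iff_true]
    exact hdeg x
  have hcards : L.card + T3.card = Fintype.card V := by
    rw [← Finset.card_union_of_disjoint hdisj, hunion, Finset.card_univ]
  have hsum : ∑ v, G.degree v = L.card + 3 * T3.card := by
    rw [← hunion, Finset.sum_union hdisj]
    have h1 : ∑ v ∈ L, G.degree v = L.card := by
      rw [Finset.sum_congr rfl (fun x hx => (Finset.mem_filter.mp hx).2)]
      simp [hL]
    have h3 : ∑ v ∈ T3, G.degree v = 3 * T3.card := by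
      rw [Finset.sum_congr rfl (fun x hx => (Finset.mem_filter.mp hx).2)]
      simp [mul_comm, hT3]
    rw [h1, h3]
  have hedge : G.edgeFinset.card + 1 = Fintype.card V := hT.card_edgeFinset
  have hhand : ∑ v, G.degree v = 2 * G.edgeFinset.card :=
    G.sum_degrees_eq_twice_card_edges
  have hcard_lt : T3.card < L.card := by omega
  -- pigeonhole: some trivalent vertex has two distinct leaf neighbours
  set f : V → V := fun l =>
    if h : (G.neighborFinset l).Nonempty then h.choose else l with hf
  have hmaps : ∀ l ∈ L, f l ∈ T3 := by
    intro l hl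
    have hdl : G.degree l = 1 := (Finset.mem_filter.mp hl).2
    have hne : (G.neighborFinset l).Nonempty := by
      rw [← Finset.card_pos, G.card_neighborFinset_eq_degree, hdl]; omega
    have hmem : f l ∈ G.neighborFinset l := by
      rw [hf]; simp only [dif_pos hne]; exact hne.choose_spec
    have hadj : G.Adj l (f l) := by simpa using hmem
    exact Finset.mem_filter.mpr ⟨Finset.mem_univ _, leaf_nbr l (f l) hdl hadj⟩
  obtain ⟨l₁, hl₁, l₂, hl₂, hne12, hfeq⟩ :=
    Finset.exists_ne_map_eq_of_card_lt_of_maps_to hcard_lt hmaps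
  set v := f l₁ with hv
  have hv3 : G.degree v = 3 := (Finset.mem_filter.mp (hmaps l₁ hl₁)).2
  have hadj1 : G.Adj l₁ v := by
    have hdl : G.degree l₁ = 1 := (Finset.mem_filter.mp hl₁).2
    have hne : (G.neighborFinset l₁).Nonempty := by
      rw [← Finset.card_pos, G.card_neighborFinset_eq_degree, hdl]; omega
    have hmem : f l₁ ∈ G.neighborFinset l₁ := by
      rw [hf]; simp only [dif_pos hne]; exact hne.choose_spec
    simpa using hmem
  have hadj2 : G.Adj l₂ v := by
    have hdl : G.degree l₂ = 1 := (Finset.mem_filter.mp hl₂).2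
    have hne : (G.neighborFinset l₂).Nonempty := by
      rw [← Finset.card_pos, G.card_neighborFinset_eq_degree, hdl]; omega
    have hmem : f l₂ ∈ G.neighborFinset l₂ := by
      rw [hf]; simp only [dif_pos hne]; exact hne.choose_spec
    rw [hfeq]
    simpa using hmem
  -- set up in/out neighbour sets
  set A : Finset V := univ.filter fun u => r u v with hA
  set B : Finset V := univ.filter fun u => r v u with hB
  set N : Finset V := G.neighborFinset v with hN
  have hAN : A ⊆ N := by
    intro u hu
    have : r u v := (Finset.mem_filter.mp hu).2
    simpa [hN] using (hr_adj u v this).symm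
  have hBN : B ⊆ N := by
    intro u hu
    have : r v u := (Finset.mem_filter.mp hu).2
    simpa [hN] using (hr_adj v u this)
  have hABdisj : Disjoint A B := by
    rw [Finset.disjoint_left]
    intro u huA huB
    have h1 : r u v := (Finset.mem_filter.mp huA).2
    have h2 : r v u := (Finset.mem_filter.mp huB).2
    exact ((hr_orient u v (hr_adj u v h1)).mp h1) h2
  have hABunion : A ∪ B = N := by
    apply Finset.Subset.antisymm (Finset.union_subset hAN hBN)
    intro u hu
    have hadj : G.Adj v u := by simpa [hN] using hu
    by_cases h : r v u
    · exact Finset.mem_union_right _ (Finset.mem_filter.mpr ⟨Finset.mem_univ _, h⟩)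
    · have : r u v := (hr_orient u v hadj.symm).mpr h
      exact Finset.mem_union_left _ (Finset.mem_filter.mpr ⟨Finset.mem_univ _, this⟩)
  have hNcard : N.card = 3 := hv3
  have hABcard : A.card + B.card = 3 := by
    rw [← Finset.card_union_of_disjoint hABdisj, hABunion, hNcard]
  obtain ⟨hA1', hB1'⟩ := hflow v hv3
  have hA1 : 1 ≤ A.card := hA1'
  have hB1 : 1 ≤ B.card := hB1'
  -- the two leaves among neighbours
  set L2 : Finset V := {l₁, l₂} with hL2
  have hL2N : L2 ⊆ N := by
    intro u hu
    rcases Finset.mem_insert.mp hu with h | h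
    · subst h; simpa [hN] using hadj1.symm
    · rw [Finset.mem_singleton.mp h]; simpa [hN] using hadj2.symm
  have hL2card : L2.card = 2 := Finset.card_pair hne12
  have key : ∀ C : Finset V, C ⊆ N → C.card = 2 → ∃ u ∈ C, G.degree u = 1 := by
    intro C hCN hC2
    have hsub : C ∪ L2 ⊆ N := Finset.union_subset hCN hL2N
    have hle : (C ∪ L2).card ≤ 3 := by
      rw [← hNcard]; exact Finset.card_le_card hsub
    have hinter : (C ∩ L2).Nonempty := by
      by_contra h
      rw [Finset.not_nonempty_iff_eq_empty] at h
      have hd : Disjoint C L2 := Finset.disjoint_iff_inter_eq_empty.mpr h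
      have h4 : (C ∪ L2).card = 4 := by
        rw [Finset.card_union_of_disjoint hd, hC2, hL2card]
      omega
    obtain ⟨u, hu⟩ := hinter
    have huC : u ∈ C := (Finset.mem_inter.mp hu).1
    have huL2 : u ∈ L2 := (Finset.mem_inter.mp hu).2
    refine ⟨u, huC, ?_⟩
    rcases Finset.mem_insert.mp huL2 with h | h
    · subst h; exact (Finset.mem_filter.mp hl₁).2
    · rw [Finset.mem_singleton.mp h]; exact (Finset.mem_filter.mp hl₂).2
  have hcase : A.card = 2 ∨ B.card = 2 := by omega
  refine ⟨v, hv3, ?_⟩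
  rcases hcase with h2 | h2
  · obtain ⟨u, huA, hu1⟩ := key A hAN h2
    exact Or.inr ⟨h2, u, (Finset.mem_filter.mp huA).2, hu1⟩
  · obtain ⟨u, huB, hu1⟩ := key B hBN h2
    exact Or.inl ⟨h2, u, (Finset.mem_filter.mp huB).2, hu1⟩
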